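/- arXiv:1401.7600 — 3 statements merged into one kernel-verified Lean document; each statement's English description precedes it below -/
import Mathlib

section
/- If l is a Lie subalgebra of sp(1) ⊕ sp(1) which is the graph of an automorphism φ of sp(1) (i.e., l = {(x, φ(x)) : x ∈ sp(1)}), then l + Δ ≠ sp(1) ⊕ sp(1), where Δ is the diagonal subalgebra. In fact dim(l + Δ) ≤ 5. -/
noncomputable section

attribute [local instance 100] LieRing.ofAssociativeRing

/-- The Lie algebra `sp(1)`: purely imaginary quaternions with the commutator bracket. -/
def sp1 : LieSubalgebra ℝ (Quaternion ℝ) where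
  carrier := {x | x.re = 0}
  zero_mem' := by simp [Set.mem_setOf_eq, Quaternion.re_zero]
  add_mem' := by
    intro x y hx hy
    simp only [Set.mem_setOf_eq, Quaternion.re_add] at *
    simp [hx, hy]
  smul_mem' := by
    intro c x hx
    simp only [Set.mem_setOf_eq, Quaternion.re_smul] at *
    simp [hx]
  lie_mem' := by
    intro x y _ _
    simp only [Set.mem_setOf_eq, Ring.lie_def, Quaternion.re_sub, Quaternion.re_mul]
    ring

/-- The Lie algebra `sp(1) ⊕ sp(1)` realized inside `ℍ × ℍ` with the componentwise
commutator bracket. -/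
def sp11 : LieSubalgebra ℝ (Quaternion ℝ × Quaternion ℝ) where
  carrier := {p | p.1.re = 0 ∧ p.2.re = 0}
  zero_mem' := by simp [Set.mem_setOf_eq, Quaternion.re_zero]
  add_mem' := by
    intro x y hx hy
    simp only [Set.mem_setOf_eq, Prod.fst_add, Prod.snd_add, Quaternion.re_add] at *
    simp [hx.1, hx.2, hy.1, hy.2]
  smul_mem' := by
    intro c x hx
    simp only [Set.mem_setOf_eq, Prod.smul_fst, Prod.smul_snd, Quaternion.re_smul] at *
    simp [hx.1, hx.2]
  lie_mem' := by
    intro x y _ _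
    simp only [Set.mem_setOf_eq, Ring.lie_def, Prod.fst_sub, Prod.snd_sub, Prod.fst_mul,
      Prod.snd_mul, Quaternion.re_sub, Quaternion.re_mul]
    constructor <;> ring

/-- The diagonal subalgebra `Δ = {(x, x) : x ∈ sp(1)}` of `sp(1) ⊕ sp(1)`. -/
def diagSp : LieSubalgebra ℝ (Quaternion ℝ × Quaternion ℝ) where
  carrier := {p | p.1 = p.2 ∧ p.1.re = 0}
  zero_mem' := by simp [Set.mem_setOf_eq, Quaternion.re_zero]
  add_mem' := by
    intro x y hx hy
    exact ⟨by simp [Prod.fst_add, Prod.snd_add, hx.1, hy.1],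
      by simp [Prod.fst_add, Quaternion.re_add, hx.2, hy.2]⟩
  smul_mem' := by
    intro c x hx
    exact ⟨by simp [hx.1], by simp [Quaternion.re_smul, hx.2]⟩
  lie_mem' := by
    intro x y hx hy
    simp only [Set.mem_setOf_eq, Ring.lie_def, Prod.fst_sub, Prod.snd_sub, Prod.fst_mul,
      Prod.snd_mul] at *
    refine ⟨by rw [hx.1, hy.1], ?_⟩
    simp only [Quaternion.re_sub, Quaternion.re_mul]
    ring


namespace Sp1Aux

lemma re_zero (x : sp1) : (x : Quaternion ℝ).re = 0 := x.2

lemma coe_smul (c : ℝ) (x : sp1) : ((c • x : sp1) : Quaternion ℝ) = c • (x : Quaternion ℝ) := rfl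

lemma coe_add (x y : sp1) : ((x + y : sp1) : Quaternion ℝ) = (x : Quaternion ℝ) + y := rfl

/-- Coordinates of a purely imaginary quaternion. -/
def sp1Equiv : sp1 ≃ₗ[ℝ] (Fin 3 → ℝ) where
  toFun x := ![(x : Quaternion ℝ).imI, (x : Quaternion ℝ).imJ, (x : Quaternion ℝ).imK]
  invFun v := ⟨⟨0, v 0, v 1, v 2⟩, rfl⟩
  map_add' x y := by
    funext i
    fin_cases i <;> simp [coe_add]
  map_smul' c x := by
    funext i
    fin_cases i <;> simp [coe_smul, Quaternion.imI_smul, Quaternion.imJ_smul, Quaternion.imK_smul]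
  left_inv x := by
    apply Subtype.ext
    apply Quaternion.ext <;> simp [(re_zero x).symm]
  right_inv v := by
    funext i
    fin_cases i <;> simp

instance : Module.Finite ℝ sp1 := Module.Finite.equiv sp1Equiv.symm

lemma finrank_sp1 : Module.finrank ℝ sp1 = 3 := by
  rw [sp1Equiv.finrank_eq, Module.finrank_fin_fun]

end Sp1Aux

namespace Sp1Aux

@[simp] lemma mk_re (a b c d : ℝ) : (⟨a, b, c, d⟩ : Quaternion ℝ).re = a := rfl
@[simp] lemma mk_imI (a b c d : ℝ) : (⟨a, b, c, d⟩ : Quaternion ℝ).imI = b := rfl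
@[simp] lemma mk_imJ (a b c d : ℝ) : (⟨a, b, c, d⟩ : Quaternion ℝ).imJ = c := rfl
@[simp] lemma mk_imK (a b c d : ℝ) : (⟨a, b, c, d⟩ : Quaternion ℝ).imK = d := rfl

def qi : sp1 := ⟨⟨0, 1, 0, 0⟩, rfl⟩
def qj : sp1 := ⟨⟨0, 0, 1, 0⟩, rfl⟩
def qk : sp1 := ⟨⟨0, 0, 0, 1⟩, rfl⟩

@[simp] lemma qi_re : (qi : Quaternion ℝ).re = 0 := rfl
@[simp] lemma qi_imI : (qi : Quaternion ℝ).imI = 1 := rfl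
@[simp] lemma qi_imJ : (qi : Quaternion ℝ).imJ = 0 := rfl
@[simp] lemma qi_imK : (qi : Quaternion ℝ).imK = 0 := rfl
@[simp] lemma qj_re : (qj : Quaternion ℝ).re = 0 := rfl
@[simp] lemma qj_imI : (qj : Quaternion ℝ).imI = 0 := rfl
@[simp] lemma qj_imJ : (qj : Quaternion ℝ).imJ = 1 := rfl
@[simp] lemma qj_imK : (qj : Quaternion ℝ).imK = 0 := rfl
@[simp] lemma qk_re : (qk : Quaternion ℝ).re = 0 := rfl
@[simp] lemma qk_imI : (qk : Quaternion ℝ).imI = 0 := rfl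
@[simp] lemma qk_imJ : (qk : Quaternion ℝ).imJ = 0 := rfl
@[simp] lemma qk_imK : (qk : Quaternion ℝ).imK = 1 := rfl

lemma coe_bracket' (x y : sp1) :
    ((⁅x, y⁆ : sp1) : Quaternion ℝ)
      = (x : Quaternion ℝ) * (y : Quaternion ℝ) - (y : Quaternion ℝ) * (x : Quaternion ℝ) := by
  rw [LieSubalgebra.coe_bracket, Ring.lie_def]

lemma bracket_ij : ⁅qi, qj⁆ = (2:ℝ) • qk := by
  apply Subtype.ext
  rw [coe_bracket', coe_smul]
  apply Quaternion.ext <;>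
    simp [Quaternion.re_mul, Quaternion.imI_mul, Quaternion.imJ_mul,
      Quaternion.imK_mul, Quaternion.re_smul, Quaternion.imI_smul, Quaternion.imJ_smul,
      Quaternion.imK_smul] <;> norm_num

lemma bracket_jk : ⁅qj, qk⁆ = (2:ℝ) • qi := by
  apply Subtype.ext
  rw [coe_bracket', coe_smul]
  apply Quaternion.ext <;>
    simp [Quaternion.re_mul, Quaternion.imI_mul, Quaternion.imJ_mul,
      Quaternion.imK_mul, Quaternion.re_smul, Quaternion.imI_smul, Quaternion.imJ_smul,
      Quaternion.imK_smul] <;> norm_num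

lemma bracket_ki : ⁅qk, qi⁆ = (2:ℝ) • qj := by
  apply Subtype.ext
  rw [coe_bracket', coe_smul]
  apply Quaternion.ext <;>
    simp [Quaternion.re_mul, Quaternion.imI_mul, Quaternion.imJ_mul,
      Quaternion.imK_mul, Quaternion.re_smul, Quaternion.imI_smul, Quaternion.imJ_smul,
      Quaternion.imK_smul] <;> norm_num

/-- Components of a quaternion commutator identity. -/
lemma comm_eq {X Y Z : Quaternion ℝ} (hX : X.re = 0) (hY : Y.re = 0)
    (h : X * Y - Y * X = (2:ℝ) • Z) :
    Z.imI = X.imJ * Y.imK - X.imK * Y.imJ ∧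
    Z.imJ = X.imK * Y.imI - X.imI * Y.imK ∧
    Z.imK = X.imI * Y.imJ - X.imJ * Y.imI := by
  refine ⟨?_, ?_, ?_⟩
  · have h0 := congrArg QuaternionAlgebra.imI h
    simp only [Quaternion.imI_sub, Quaternion.imI_mul, hX, hY, Quaternion.imI_smul,
      smul_eq_mul] at h0
    linarith
  · have h0 := congrArg QuaternionAlgebra.imJ h
    simp only [Quaternion.imJ_sub, Quaternion.imJ_mul, hX, hY, Quaternion.imJ_smul,
      smul_eq_mul] at h0
    linarith
  · have h0 := congrArg QuaternionAlgebra.imK h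
    simp only [Quaternion.imK_sub, Quaternion.imK_mul, hX, hY, Quaternion.imK_smul,
      smul_eq_mul] at h0
    linarith

end Sp1Aux

namespace Sp1Aux

open Matrix

set_option maxHeartbeats 1000000 in
lemma exists_fixed (φ : sp1 ≃ₗ⁅ℝ⁆ sp1) : ∃ x : sp1, x ≠ 0 ∧ φ x = x := by
  set A : Quaternion ℝ := (φ qi : Quaternion ℝ) with hA
  set B : Quaternion ℝ := (φ qj : Quaternion ℝ) with hB
  set C : Quaternion ℝ := (φ qk : Quaternion ℝ) with hC
  have hAre : A.re = 0 := re_zero _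
  have hBre : B.re = 0 := re_zero _
  have hCre : C.re = 0 := re_zero _
  -- bracket relations transported through φ
  have hmap : ∀ u v : sp1, φ ⁅u, v⁆ = ⁅φ u, φ v⁆ := fun u v =>
    (φ : sp1 →ₗ⁅ℝ⁆ sp1).map_lie u v
  have hφsmul : ∀ (c : ℝ) (u : sp1), φ (c • u) = c • φ u := fun c u =>
    (φ : sp1 →ₗ⁅ℝ⁆ sp1).map_smul c u
  have hφadd : ∀ u v : sp1, φ (u + v) = φ u + φ v := fun u v =>
    (φ : sp1 →ₗ⁅ℝ⁆ sp1).map_add u v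
  have hIJ : A * B - B * A = (2:ℝ) • C := by
    have h1 : ⁅φ qi, φ qj⁆ = (2:ℝ) • φ qk := by
      rw [← hmap, bracket_ij, hφsmul]
    have h2 := congrArg Subtype.val h1
    rwa [coe_bracket', coe_smul] at h2
  have hJK : B * C - C * B = (2:ℝ) • A := by
    have h1 : ⁅φ qj, φ qk⁆ = (2:ℝ) • φ qi := by
      rw [← hmap, bracket_jk, hφsmul]
    have h2 := congrArg Subtype.val h1
    rwa [coe_bracket', coe_smul] at h2
  have hKI : C * A - A * C = (2:ℝ) • B := by
    have h1 : ⁅φ qk, φ qi⁆ = (2:ℝ) • φ qj := by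
      rw [← hmap, bracket_ki, hφsmul]
    have h2 := congrArg Subtype.val h1
    rwa [coe_bracket', coe_smul] at h2
  obtain ⟨hc0, hc1, hc2⟩ := comm_eq hAre hBre hIJ
  obtain ⟨ha0, ha1, ha2⟩ := comm_eq hBre hCre hJK
  obtain ⟨hb0, hb1, hb2⟩ := comm_eq hCre hAre hKI
  -- orthogonality
  have hab : A.imI * B.imI + A.imJ * B.imJ + A.imK * B.imK = 0 := by
    linear_combination B.imI * ha0 + B.imJ * ha1 + B.imK * ha2
  have hbc : B.imI * C.imI + B.imJ * C.imJ + B.imK * C.imK = 0 := by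
    linear_combination C.imI * hb0 + C.imJ * hb1 + C.imK * hb2
  have hca : C.imI * A.imI + C.imJ * A.imJ + C.imK * A.imK = 0 := by
    linear_combination A.imI * hc0 + A.imJ * hc1 + A.imK * hc2
  -- norms
  have hp_pos : 0 < A.imI ^ 2 + A.imJ ^ 2 + A.imK ^ 2 := by
    have hA0 : A ≠ 0 := by
      intro h
      have hz : φ (0 : sp1) = 0 := by
        have h0 := hφsmul 0 qi
        simpa using h0
      have h2 : φ qi = φ (0 : sp1) := by
        rw [hz]
        exact Subtype.ext (by rw [← hA]; exact h)
      have hinj : Function.Injective (⇑φ) := φ.toLinearEquiv.injective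
      have h3 : qi = (0 : sp1) := hinj h2
      have h4 := congrArg (fun y : sp1 => (y : Quaternion ℝ).imI) h3
      simp at h4
      exact one_ne_zero h4
    rcases lt_or_ge 0 (A.imI ^ 2 + A.imJ ^ 2 + A.imK ^ 2) with h | h
    · exact h
    · exfalso
      apply hA0
      have h1 : A.imI ^ 2 = 0 :=
        le_antisymm (by linarith [sq_nonneg A.imJ, sq_nonneg A.imK]) (sq_nonneg _)
      have h2 : A.imJ ^ 2 = 0 :=
        le_antisymm (by linarith [sq_nonneg A.imI, sq_nonneg A.imK]) (sq_nonneg _)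
      have h3 : A.imK ^ 2 = 0 :=
        le_antisymm (by linarith [sq_nonneg A.imI, sq_nonneg A.imJ]) (sq_nonneg _)
      apply Quaternion.ext <;>
        simp [hAre, sq_eq_zero_iff.mp h1, sq_eq_zero_iff.mp h2, sq_eq_zero_iff.mp h3] <;> rfl
  have hr_eq : C.imI ^ 2 + C.imJ ^ 2 + C.imK ^ 2
      = (A.imI ^ 2 + A.imJ ^ 2 + A.imK ^ 2) * (B.imI ^ 2 + B.imJ ^ 2 + B.imK ^ 2) := by
    rw [hc0, hc1, hc2]
    linear_combination (-(A.imI * B.imI + A.imJ * B.imJ + A.imK * B.imK)) * hab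
  have hp_eq : A.imI ^ 2 + A.imJ ^ 2 + A.imK ^ 2
      = (B.imI ^ 2 + B.imJ ^ 2 + B.imK ^ 2) * (C.imI ^ 2 + C.imJ ^ 2 + C.imK ^ 2) := by
    rw [ha0, ha1, ha2]
    linear_combination (-(B.imI * C.imI + B.imJ * C.imJ + B.imK * C.imK)) * hbc
  have hq_eq : B.imI ^ 2 + B.imJ ^ 2 + B.imK ^ 2
      = (C.imI ^ 2 + C.imJ ^ 2 + C.imK ^ 2) * (A.imI ^ 2 + A.imJ ^ 2 + A.imK ^ 2) := by
    rw [hb0, hb1, hb2]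
    linear_combination (-(C.imI * A.imI + C.imJ * A.imJ + C.imK * A.imK)) * hca
  set p := A.imI ^ 2 + A.imJ ^ 2 + A.imK ^ 2 with hp_def
  set q := B.imI ^ 2 + B.imJ ^ 2 + B.imK ^ 2 with hq_def
  set r := C.imI ^ 2 + C.imJ ^ 2 + C.imK ^ 2 with hr_def
  have hr_nonneg : 0 ≤ r := by rw [hr_def]; positivity
  have key : p * (r ^ 2 - 1) = 0 := by linear_combination -hp_eq - r * hq_eq
  have hr1 : r = 1 := by
    rcases mul_eq_zero.mp key with h | h
    · exact absurd h (ne_of_gt hp_pos)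
    · have h' : (r - 1) * (r + 1) = 0 := by linear_combination h
      rcases mul_eq_zero.mp h' with h'' | h''
      · linarith
      · linarith
  have hqp : q = p := by rw [hq_eq, hr1, one_mul]
  have hp1 : p = 1 := by
    rw [hr1, hqp] at hr_eq
    have h' : (p - 1) * (p + 1) = 0 := by linear_combination -hr_eq
    rcases mul_eq_zero.mp h' with h'' | h''
    · linarith
    · linarith
  have hq1 : q = 1 := by rw [hqp, hp1]
  rw [hp_def] at hp1
  rw [hq_def] at hq1
  rw [hr_def] at hr1
  -- the matrix with columns the coordinates of A, B, C
  set M : Matrix (Fin 3) (Fin 3) ℝ :=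
    Matrix.of ![![A.imI, B.imI, C.imI], ![A.imJ, B.imJ, C.imJ], ![A.imK, B.imK, C.imK]] with hM_def
  have hMTM : Mᵀ * M = 1 := by
    ext i j
    rw [Matrix.mul_apply]
    simp only [Matrix.transpose_apply]
    fin_cases i <;> fin_cases j <;>
        simp [hM_def, Fin.sum_univ_three, Matrix.one_apply]
    · linear_combination hp1
    · linear_combination hab
    · linear_combination hca
    · linear_combination hab
    · linear_combination hq1
    · linear_combination hbc
    · linear_combination hca
    · linear_combination hbc
    · linear_combination hr1
  have hdet : M.det = 1 := by
    rw [Matrix.det_fin_three]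
    simp [hM_def]
    linear_combination (-A.imI) * ha0 - A.imJ * ha1 - A.imK * ha2 + hp1
  have hdet0 : (M - 1).det = 0 := by
    have h1 : (M - 1).det = (1 - M).det := by
      calc (M - 1).det = Mᵀ.det * (M - 1).det := by
            rw [Matrix.det_transpose, hdet, one_mul]
        _ = (Mᵀ * (M - 1)).det := (Matrix.det_mul _ _).symm
        _ = (1 - Mᵀ).det := by rw [Matrix.mul_sub, hMTM, Matrix.mul_one]
        _ = ((1 - M)ᵀ).det := by rw [Matrix.transpose_sub, Matrix.transpose_one]
        _ = (1 - M).det := Matrix.det_transpose _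
    have h2 : (1 - M).det = -(M - 1).det := by
      rw [← neg_sub M 1, Matrix.det_neg]
      norm_num
    linarith
  obtain ⟨w, hw0, hww⟩ := Matrix.exists_mulVec_eq_zero_iff.mpr hdet0
  have hw : M *ᵥ w = w := by
    rw [Matrix.sub_mulVec, Matrix.one_mulVec, sub_eq_zero] at hww
    exact hww
  have e0 := congrFun hw 0
  have e1 := congrFun hw 1
  have e2 := congrFun hw 2
  simp [hM_def, Matrix.mulVec, dotProduct, Fin.sum_univ_three] at e0 e1 e2
  -- the fixed vector
  refine ⟨⟨⟨0, w 0, w 1, w 2⟩, rfl⟩, ?_, ?_⟩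
  · intro h
    apply hw0
    have h0 : (⟨0, w 0, w 1, w 2⟩ : Quaternion ℝ) = 0 := congrArg Subtype.val h
    funext i
    fin_cases i
    · simpa using congrArg QuaternionAlgebra.imI h0
    · simpa using congrArg QuaternionAlgebra.imJ h0
    · simpa using congrArg QuaternionAlgebra.imK h0
  · have hx : (⟨⟨0, w 0, w 1, w 2⟩, rfl⟩ : sp1) = w 0 • qi + w 1 • qj + w 2 • qk := by
      apply Subtype.ext
      rw [coe_add, coe_add, coe_smul, coe_smul, coe_smul]
      apply Quaternion.ext <;>
        simp [Quaternion.re_add, Quaternion.imI_add, Quaternion.imJ_add,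
          Quaternion.imK_add, Quaternion.re_smul, Quaternion.imI_smul, Quaternion.imJ_smul,
          Quaternion.imK_smul]
    rw [hx, hφadd, hφadd, hφsmul, hφsmul, hφsmul]
    rw [← hx]
    apply Subtype.ext
    rw [coe_add, coe_add, coe_smul, coe_smul, coe_smul]
    apply Quaternion.ext <;>
        simp [← hA, ← hB, ← hC, Quaternion.re_add, Quaternion.imI_add,
          Quaternion.imJ_add, Quaternion.imK_add, Quaternion.re_smul, Quaternion.imI_smul,
          Quaternion.imJ_smul, Quaternion.imK_smul, hAre, hBre, hCre] <;>
      linarith [e0, e1, e2]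

end Sp1Aux

namespace Sp1Aux

/-- The inclusion of `sp1` into the quaternions, as a linear map. -/
def incl : sp1 →ₗ[ℝ] Quaternion ℝ where
  toFun x := (x : Quaternion ℝ)
  map_add' x y := rfl
  map_smul' c x := rfl

lemma incl_injective : Function.Injective incl := fun x y h => Subtype.ext h

/-- The graph of `φ` as the range of a linear map from `sp1`. -/
def graphMap (φ : sp1 ≃ₗ⁅ℝ⁆ sp1) : sp1 →ₗ[ℝ] Quaternion ℝ × Quaternion ℝ where
  toFun x := ((x : Quaternion ℝ), (φ x : Quaternion ℝ))
  map_add' x y := by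
    have h : φ (x + y) = φ x + φ y := (φ : sp1 →ₗ⁅ℝ⁆ sp1).map_add x y
    show ((((x + y) : sp1) : Quaternion ℝ), (φ (x + y) : Quaternion ℝ)) = _
    rw [h]; rfl
  map_smul' c x := by
    have h : φ (c • x) = c • φ x := (φ : sp1 →ₗ⁅ℝ⁆ sp1).map_smul c x
    show ((((c • x) : sp1) : Quaternion ℝ), (φ (c • x) : Quaternion ℝ)) = _
    rw [h]; rfl

lemma graphMap_injective (φ : sp1 ≃ₗ⁅ℝ⁆ sp1) : Function.Injective (graphMap φ) :=
  fun x y h => Subtype.ext (congrArg Prod.fst h)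

/-- The diagonal as the range of a linear map from `sp1`. -/
def diagMap : sp1 →ₗ[ℝ] Quaternion ℝ × Quaternion ℝ where
  toFun x := ((x : Quaternion ℝ), (x : Quaternion ℝ))
  map_add' x y := rfl
  map_smul' c x := rfl

lemma diagMap_injective : Function.Injective diagMap :=
  fun x y h => Subtype.ext (congrArg Prod.fst h)

lemma diag_eq_range : diagSp.toSubmodule = LinearMap.range diagMap := by
  ext p
  constructor
  · intro hp
    have hp' : p.1 = p.2 ∧ p.1.re = 0 := hp
    exact ⟨⟨p.1, hp'.2⟩, Prod.ext rfl hp'.1⟩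
  · rintro ⟨x, rfl⟩
    exact ⟨rfl, x.2⟩

/-- The product map realizing `sp11`. -/
def pairMap : (sp1 × sp1) →ₗ[ℝ] Quaternion ℝ × Quaternion ℝ := incl.prodMap incl

lemma pairMap_injective : Function.Injective pairMap := by
  intro x y h
  have h1 := congrArg Prod.fst h
  have h2 := congrArg Prod.snd h
  exact Prod.ext (incl_injective h1) (incl_injective h2)

lemma sp11_eq_range : sp11.toSubmodule = LinearMap.range pairMap := by
  ext p
  constructor
  · intro hp
    have hp' : p.1.re = 0 ∧ p.2.re = 0 := hp
    exact ⟨(⟨p.1, hp'.1⟩, ⟨p.2, hp'.2⟩), Prod.ext rfl rfl⟩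
  · rintro ⟨x, rfl⟩
    exact ⟨x.1.2, x.2.2⟩

lemma finrank_sp11 : Module.finrank ℝ sp11.toSubmodule = 6 := by
  rw [sp11_eq_range, LinearMap.finrank_range_of_inj pairMap_injective,
    Module.finrank_prod, finrank_sp1]

end Sp1Aux

/-- If `l` is the graph of an automorphism `φ` of `sp(1)` inside
`sp(1) ⊕ sp(1)`, then `l + Δ ≠ sp(1) ⊕ sp(1)`; in fact `dim (l + Δ) ≤ 5`. -/
theorem graph_plus_diagonal_ne_top
    (φ : sp1 ≃ₗ⁅ℝ⁆ sp1)
    (l : LieSubalgebra ℝ (Quaternion ℝ × Quaternion ℝ))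
    (hgraph : ∀ p : Quaternion ℝ × Quaternion ℝ,
      p ∈ l ↔ ∃ x : sp1, p = ((x : Quaternion ℝ), (φ x : Quaternion ℝ))) :
    l.toSubmodule ⊔ diagSp.toSubmodule ≠ sp11.toSubmodule ∧
    Module.finrank ℝ ↥(l.toSubmodule ⊔ diagSp.toSubmodule) ≤ 5 := by
  have hl : l.toSubmodule = LinearMap.range (Sp1Aux.graphMap φ) := by
    ext p
    rw [LieSubalgebra.mem_toSubmodule, hgraph p]
    constructor
    · rintro ⟨x, rfl⟩; exact ⟨x, rfl⟩
    · rintro ⟨x, rfl⟩; exact ⟨x, rfl⟩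
  have hfl : Module.finrank ℝ l.toSubmodule = 3 := by
    rw [hl, LinearMap.finrank_range_of_inj (Sp1Aux.graphMap_injective φ), Sp1Aux.finrank_sp1]
  have hfd : Module.finrank ℝ diagSp.toSubmodule = 3 := by
    rw [Sp1Aux.diag_eq_range, LinearMap.finrank_range_of_inj Sp1Aux.diagMap_injective, Sp1Aux.finrank_sp1]
  obtain ⟨x, hx0, hfix⟩ := Sp1Aux.exists_fixed φ
  set z : Quaternion ℝ × Quaternion ℝ := ((x : Quaternion ℝ), (x : Quaternion ℝ)) with hz
  have hzl : z ∈ l.toSubmodule := by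
    rw [LieSubalgebra.mem_toSubmodule, hgraph]
    exact ⟨x, by rw [hfix]⟩
  have hzd : z ∈ diagSp.toSubmodule := ⟨rfl, x.2⟩
  have hzne : z ≠ 0 := by
    intro h
    exact hx0 (Subtype.ext (congrArg Prod.fst h))
  have hinf : 0 < Module.finrank ℝ ↥(l.toSubmodule ⊓ diagSp.toSubmodule) := by
    rw [Module.finrank_pos_iff]
    refine ⟨⟨z, Submodule.mem_inf.mpr ⟨hzl, hzd⟩⟩, 0, ?_⟩
    intro h
    exact hzne (congrArg Subtype.val h)
  have hsum := Submodule.finrank_sup_add_finrank_inf_eq l.toSubmodule diagSp.toSubmodule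
  rw [hfl, hfd] at hsum
  have hle : Module.finrank ℝ ↥(l.toSubmodule ⊔ diagSp.toSubmodule) ≤ 5 := by omega
  refine ⟨?_, hle⟩
  intro h
  have h6 := Sp1Aux.finrank_sp11
  rw [← h] at h6
  omega

end
end

section
/- If a subalgebra h = l ⊕ q of su(n,1) with q = q_{k,l'} = {[[0,z],[z̄ᵗ,0]] : z ∈ {0}^k × ℝ^{l'} × ℂ^{n−k−l'}} satisfies [q,q] ⊆ l ⊆ N_k(q) (the normalizer of q in the maximal compact subalgebra k), then l' = 0 or n − k − l' = 0. -/
noncomputable section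

/-- The element of `p ⊂ su(n,1)` given by the block matrix `[[0, z],[z̄ᵗ, 0]]`. -/
def suP (n : ℕ) (z : Fin n → ℂ) : Matrix (Fin n ⊕ Unit) (Fin n ⊕ Unit) ℂ :=
  Matrix.of fun i j =>
    match i, j with
    | Sum.inl _, Sum.inl _ => 0
    | Sum.inl i, Sum.inr _ => z i
    | Sum.inr _, Sum.inl j => star (z j)
    | Sum.inr _, Sum.inr _ => 0
/-- If a subalgebra `h = l ⊕ q_{k,l'}` of `su(n,1)` satisfies
`[q,q] ⊆ l ⊆ N_k(q)`, then `l' = 0` or `n − k − l' = 0`. Here `Q` is the set of elements of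
`q_{k,l'}` and `N` is the set of elements of the normalizer of `q_{k,l'}` in the maximal
compact subalgebra `k = s(u(n) ⊕ u(1))`. -/
theorem constraint_forces_degenerate_normal_form (n k l' : ℕ) (hk : k + l' ≤ n)
    (Q : Set (Matrix (Fin n ⊕ Unit) (Fin n ⊕ Unit) ℂ))
    (hQ : Q = {M | ∃ z : Fin n → ℂ,
        (∀ i : Fin n, (i : ℕ) < k → z i = 0) ∧
        (∀ i : Fin n, k ≤ (i : ℕ) → (i : ℕ) < k + l' → (z i).im = 0) ∧
        M = suP n z})
    (N : Set (Matrix (Fin n ⊕ Unit) (Fin n ⊕ Unit) ℂ))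
    (hN : N = {M | M.conjTranspose = -M ∧ Matrix.trace M = 0 ∧
        (∀ i : Fin n, M (Sum.inl i) (Sum.inr ()) = 0 ∧ M (Sum.inr ()) (Sum.inl i) = 0) ∧
        ∀ X ∈ Q, ⁅M, X⁆ ∈ Q})
    (L : Submodule ℝ (Matrix (Fin n ⊕ Unit) (Fin n ⊕ Unit) ℂ))
    (hLN : (L : Set (Matrix (Fin n ⊕ Unit) (Fin n ⊕ Unit) ℂ)) ⊆ N)
    (hQL : ∀ X ∈ Q, ∀ Y ∈ Q, ⁅X, Y⁆ ∈ L) :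
    l' = 0 ∨ k + l' = n := by
  by_contra hcon
  push_neg at hcon
  obtain ⟨hl', hkl⟩ := hcon
  have ha : k < n := lt_of_lt_of_le (Nat.lt_add_of_pos_right (Nat.pos_of_ne_zero hl')) hk
  have hb : k + l' < n := lt_of_le_of_ne hk hkl
  set a : Fin n := ⟨k, ha⟩ with ha_def
  set b : Fin n := ⟨k + l', hb⟩ with hb_def
  have hab : a ≠ b := by
    simp [ha_def, hb_def, Fin.ext_iff]
    omega
  set z : Fin n → ℂ := fun i => if i = a then 1 else 0 with hz_def
  set w : Fin n → ℂ := fun i => if i = b then 1 else 0 with hw_def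
  set v : Fin n → ℂ := fun i => if i = b then Complex.I else 0 with hv_def
  have hX : suP n z ∈ Q := by
    rw [hQ]
    refine ⟨z, ?_, ?_, rfl⟩
    · intro i hi
      have : i ≠ a := by simp [ha_def, Fin.ext_iff]; omega
      simp [hz_def, this]
    · intro i _ _
      by_cases h : i = a <;> simp [hz_def, h]
  have hY : suP n w ∈ Q := by
    rw [hQ]
    refine ⟨w, ?_, ?_, rfl⟩
    · intro i hi
      have : i ≠ b := by simp [hb_def, Fin.ext_iff]; omega
      simp [hw_def, this]
    · intro i _ hi
      have : i ≠ b := by simp [hb_def, Fin.ext_iff]; omega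
      simp [hw_def, this]
  have hV : suP n v ∈ Q := by
    rw [hQ]
    refine ⟨v, ?_, ?_, rfl⟩
    · intro i hi
      have : i ≠ b := by simp [hb_def, Fin.ext_iff]; omega
      simp [hv_def, this]
    · intro i _ hi
      have : i ≠ b := by simp [hb_def, Fin.ext_iff]; omega
      simp [hv_def, this]
  have hM : ⁅suP n z, suP n w⁆ ∈ N := hLN (hQL _ hX _ hY)
  rw [hN] at hM
  obtain ⟨-, -, -, hMQ⟩ := hM
  have hBr := hMQ _ hV
  rw [hQ] at hBr
  obtain ⟨u, -, hu2, hu3⟩ := hBr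
  have hua : (u a).im = 0 := by
    apply hu2 a <;> simp [ha_def] <;> omega
  have hentry : ⁅⁅suP n z, suP n w⁆, suP n v⁆ (Sum.inl a) (Sum.inr ()) = u a := by
    rw [hu3]; rfl
  have hcompute : ⁅⁅suP n z, suP n w⁆, suP n v⁆ (Sum.inl a) (Sum.inr ()) = Complex.I := by
    simp only [Ring.lie_def, Matrix.sub_apply, Matrix.mul_apply, Fintype.sum_sum_type,
      Finset.univ_unique, Finset.sum_singleton, suP, Matrix.of_apply]
    simp [hz_def, hw_def, hv_def, Finset.sum_ite_eq', hab, hab.symm, mul_ite]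
  rw [hentry] at hcompute
  rw [hcompute] at hua
  simp at hua
end
end

section
/- Let L be a connected closed subgroup of O(4) acting transitively on the unit sphere S³ ⊂ ℝ⁴. Then, under the identification so(4) ≅ sp(1) ⊕ sp(1) given by quaternions, the Lie algebra of L is one of: sp(1) ⊕ sp(1), sp(1) ⊕ l₂, or l₂ ⊕ sp(1), where l₂ is a (possibly trivial or one-dimensional torus) subalgebra of sp(1); in particular l contains at least one full sp(1)-factor. -/
noncomputable section

attribute [local instance 100] LieRing.ofAssociativeRing

section Helpers

local notation "ℍ" => Quaternion ℝ

attribute [local simp] Quaternion.re_zero Quaternion.imI_zero Quaternion.imJ_zero Quaternion.imK_zero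

/-- The quaternion `i`. -/
def qI : Quaternion ℝ := ⟨0,1,0,0⟩
/-- The quaternion `j`. -/
def qJ : Quaternion ℝ := ⟨0,0,1,0⟩
/-- The quaternion `k`. -/
def qK : Quaternion ℝ := ⟨0,0,0,1⟩

lemma mem_sp11' (p : ℍ × ℍ) : p ∈ sp11 ↔ p.1.re = 0 ∧ p.2.re = 0 := Iff.rfl

lemma lie_prod' (p q : ℍ × ℍ) : ⁅p,q⁆ = (⁅p.1,q.1⁆, ⁅p.2,q.2⁆) := by
  simp [Ring.lie_def, Prod.ext_iff, Prod.fst_mul, Prod.snd_mul]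

lemma lie_re' (x y : ℍ) : (⁅x,y⁆).re = 0 := by
  simp [Ring.lie_def, Quaternion.re_sub, Quaternion.re_mul]; ring
lemma lie_imI' (x y : ℍ) : (⁅x,y⁆).imI = 2*(x.imJ*y.imK - x.imK*y.imJ) := by
  simp [Ring.lie_def]; ring
lemma lie_imJ' (x y : ℍ) : (⁅x,y⁆).imJ = 2*(x.imK*y.imI - x.imI*y.imK) := by
  simp [Ring.lie_def]; ring
lemma lie_imK' (x y : ℍ) : (⁅x,y⁆).imK = 2*(x.imI*y.imJ - x.imJ*y.imI) := by
  simp [Ring.lie_def]; ring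

lemma hIJ' : ⁅qI, qJ⁆ = (2:ℝ) • qK := by
  ext <;> simp [Ring.lie_def, Quaternion.re_mul, Quaternion.imI_mul,
    Quaternion.imJ_mul, Quaternion.imK_mul] <;> simp [qI, qJ, qK] <;> norm_num
lemma hJK' : ⁅qJ, qK⁆ = (2:ℝ) • qI := by
  ext <;> simp [Ring.lie_def, Quaternion.re_mul, Quaternion.imI_mul,
    Quaternion.imJ_mul, Quaternion.imK_mul] <;> simp [qI, qJ, qK] <;> norm_num
lemma hKI' : ⁅qK, qI⁆ = (2:ℝ) • qJ := by
  ext <;> simp [Ring.lie_def, Quaternion.re_mul, Quaternion.imI_mul,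
    Quaternion.imJ_mul, Quaternion.imK_mul] <;> simp [qI, qJ, qK] <;> norm_num

lemma span3 (x y z : ℍ) (hx : x.re = 0) (hy : y.re = 0) (hz : z.re = 0) (hne : ⁅x,y⁆ ≠ 0) :
    ∃ α β γ : ℝ, z = α • x + β • y + γ • ⁅x,y⁆ := by
  set x1 := x.imI; set x2 := x.imJ; set x3 := x.imK
  set y1 := y.imI; set y2 := y.imJ; set y3 := y.imK
  set z1 := z.imI; set z2 := z.imJ; set z3 := z.imK
  set G : ℝ := (x2*y3-x3*y2)^2+(x3*y1-x1*y3)^2+(x1*y2-x2*y1)^2 with hG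
  have hGpos : G ≠ 0 := by
    intro h0
    apply hne
    have h1 : x2*y3-x3*y2 = 0 := by
      nlinarith [sq_nonneg (x2*y3-x3*y2), sq_nonneg (x3*y1-x1*y3), sq_nonneg (x1*y2-x2*y1)]
    have h2 : x3*y1-x1*y3 = 0 := by
      nlinarith [sq_nonneg (x2*y3-x3*y2), sq_nonneg (x3*y1-x1*y3), sq_nonneg (x1*y2-x2*y1)]
    have h3 : x1*y2-x2*y1 = 0 := by
      nlinarith [sq_nonneg (x2*y3-x3*y2), sq_nonneg (x3*y1-x1*y3), sq_nonneg (x1*y2-x2*y1)]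
    ext
    · exact lie_re' x y
    · rw [lie_imI' x y]; simp; linarith
    · rw [lie_imJ' x y]; simp; linarith
    · rw [lie_imK' x y]; simp; linarith
  refine ⟨((z1*x1+z2*x2+z3*x3)*(y1*y1+y2*y2+y3*y3)-(z1*y1+z2*y2+z3*y3)*(x1*y1+x2*y2+x3*y3))/G,
    ((z1*y1+z2*y2+z3*y3)*(x1*x1+x2*x2+x3*x3)-(z1*x1+z2*x2+z3*x3)*(x1*y1+x2*y2+x3*y3))/G,
    (z1*(x2*y3-x3*y2)+z2*(x3*y1-x1*y3)+z3*(x1*y2-x2*y1))/(2*G), ?_⟩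
  have h2G : (2:ℝ)*G ≠ 0 := by simp [hGpos]
  ext
  · simp [Quaternion.re_smul, lie_re' x y, hz, hx, hy]
  · simp only [Quaternion.imI_add, Quaternion.imI_smul, lie_imI' x y, smul_eq_mul]
    field_simp
    ring
  · simp only [Quaternion.imJ_add, Quaternion.imJ_smul, lie_imJ' x y, smul_eq_mul]
    field_simp
    ring
  · simp only [Quaternion.imK_add, Quaternion.imK_smul, lie_imK' x y, smul_eq_mul]
    field_simp
    ring

lemma double_bracket (x y : ℍ) (hx : x.re = 0) (hy : y.re = 0) :
    (4*(x.imI^2+x.imJ^2+x.imK^2)) • y = ⁅⁅x,y⁆,x⁆ - (4*(x*y).re) • x := by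
  ext <;> simp [Ring.lie_def, Quaternion.re_mul, Quaternion.imI_mul, Quaternion.imJ_mul,
    Quaternion.imK_mul, hx, hy] <;> ring

lemma caseA (a1 a2 a3 b1 b2 b3 c1 c2 c3 : ℝ)
    (hab1 : a2*b3-a3*b2 = 0) (hab2 : a3*b1-a1*b3 = 0) (hab3 : a1*b2-a2*b1 = 0)
    (hac1 : a2*c3-a3*c2 = 0) (hac2 : a3*c1-a1*c3 = 0) (hac3 : a1*c2-a2*c1 = 0)
    (hbc1 : b2*c3-b3*c2 = 0) (hbc2 : b3*c1-b1*c3 = 0) (hbc3 : b1*c2-b2*c1 = 0)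
    (hde1 : (a2)*(b3)-(a3)*(b2-1) = 0) (hde2 : (a3)*(b1)-(a1-1)*(b3) = 0)
    (hde3 : (a1-1)*(b2-1)-(a2)*(b1) = 0)
    (hdf1 : (a2)*(c3-1)-(a3)*(c2) = 0) (hdf2 : (a3)*(c1)-(a1-1)*(c3-1) = 0)
    (hdf3 : (a1-1)*(c2)-(a2)*(c1) = 0)
    (hef1 : (b2-1)*(c3-1)-(b3)*(c2) = 0) (hef2 : (b3)*(c1)-(b1)*(c3-1) = 0)
    (hef3 : (b1)*(c2)-(b2-1)*(c1) = 0) : False := by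
  have key : (1:ℝ) = 0 := by
    linear_combination hab3
      + b1*hac1 + (b2-1)*hac2 + b3*hac3
      - ((a1-1)*hbc1 + a2*hbc2 + a3*hbc3)
      + a1*hef1 + a2*hef2 + a3*hef3
      - (b1*hdf1 + b2*hdf2 + b3*hdf3)
      + hde3
  exact one_ne_zero key

open Matrix in
lemma graphCase (a1 a2 a3 b1 b2 b3 c1 c2 c3 u1 u2 u3 v1 v2 v3 w1 w2 w3 : ℝ)
    (R1 : a2*b3-a3*b2 = c1) (R2 : a3*b1-a1*b3 = c2) (R3 : a1*b2-a2*b1 = c3)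
    (S1 : b2*c3-b3*c2 = a1) (S2 : b3*c1-b1*c3 = a2) (S3 : b1*c2-b2*c1 = a3)
    (T1 : c2*a3-c3*a2 = b1) (T2 : c3*a1-c1*a3 = b2) (T3 : c1*a2-c2*a1 = b3)
    (hp : ¬(a1 = 0 ∧ a2 = 0 ∧ a3 = 0))
    (U1 : u1 - (u1*a1+u2*b1+u3*c1) = 1) (U2 : u2 - (u1*a2+u2*b2+u3*c2) = 0)
    (U3 : u3 - (u1*a3+u2*b3+u3*c3) = 0)
    (V1 : v1 - (v1*a1+v2*b1+v3*c1) = 0) (V2 : v2 - (v1*a2+v2*b2+v3*c2) = 1)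
    (V3 : v3 - (v1*a3+v2*b3+v3*c3) = 0)
    (W1 : w1 - (w1*a1+w2*b1+w3*c1) = 0) (W2 : w2 - (w1*a2+w2*b2+w3*c2) = 0)
    (W3 : w3 - (w1*a3+w2*b3+w3*c3) = 1) : False := by
  have hdpq : a1*b1+a2*b2+a3*b3 = 0 := by linear_combination -(a1*T1 + a2*T2 + a3*T3)
  have hdqr : b1*c1+b2*c2+b3*c3 = 0 := by linear_combination -(b1*R1 + b2*R2 + b3*R3)
  have hdrp : c1*a1+c2*a2+c3*a3 = 0 := by linear_combination -(c1*S1 + c2*S2 + c3*S3)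
  have hsu : a1^2+a2^2+a3^2 = c1^2+c2^2+c3^2 := by
    linear_combination -(a1*S1+a2*S2+a3*S3) + (c1*R1+c2*R2+c3*R3)
  have htu : b1^2+b2^2+b3^2 = c1^2+c2^2+c3^2 := by
    linear_combination -(b1*T1+b2*T2+b3*T3) + (c1*R1+c2*R2+c3*R3)
  have hlag : c1^2+c2^2+c3^2 =
      (a1^2+a2^2+a3^2)*(b1^2+b2^2+b3^2) - (a1*b1+a2*b2+a3*b3)^2 := by
    linear_combination (-(c1 + (a2*b3-a3*b2)))*R1 + (-(c2 + (a3*b1-a1*b3)))*R2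
      + (-(c3 + (a1*b2-a2*b1)))*R3
  have hs0 : a1^2+a2^2+a3^2 ≠ 0 := by
    intro h0
    have e1 : a1^2 = 0 := by linarith [sq_nonneg a1, sq_nonneg a2, sq_nonneg a3]
    have e2 : a2^2 = 0 := by linarith [sq_nonneg a1, sq_nonneg a2, sq_nonneg a3]
    have e3 : a3^2 = 0 := by linarith [sq_nonneg a1, sq_nonneg a2, sq_nonneg a3]
    exact hp ⟨sq_eq_zero_iff.mp e1, sq_eq_zero_iff.mp e2, sq_eq_zero_iff.mp e3⟩
  have huu : (c1^2+c2^2+c3^2) = (c1^2+c2^2+c3^2)*(c1^2+c2^2+c3^2) := by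
    linear_combination hlag + (b1^2+b2^2+b3^2)*hsu + (c1^2+c2^2+c3^2)*htu
      - (a1*b1+a2*b2+a3*b3)*hdpq
  have hu1 : c1^2+c2^2+c3^2 = 1 := by
    rcases mul_eq_zero.mp (show (c1^2+c2^2+c3^2) * ((c1^2+c2^2+c3^2) - 1) = 0 by
        linear_combination -huu) with h | h
    · exact absurd (hsu.trans h) hs0
    · linarith
  have hs1 : a1^2+a2^2+a3^2 = 1 := hsu.trans hu1
  have ht1 : b1^2+b2^2+b3^2 = 1 := htu.trans hu1
  set M : Matrix (Fin 3) (Fin 3) ℝ := !![a1, b1, c1; a2, b2, c2; a3, b3, c3] with hM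
  have hdet : M.det = 1 := by
    rw [hM, Matrix.det_fin_three]
    simp
    linear_combination c1*R1+c2*R2+c3*R3 + hu1
  have hMtM : Mᵀ * (1 - M) = (M - 1)ᵀ := by
    ext i j
    rw [Matrix.mul_apply, Fin.sum_univ_three]
    fin_cases i <;> fin_cases j <;>
      simp [hM, Matrix.one_apply] <;> linarith [hs1, ht1, hu1, hdpq, hdqr, hdrp]
  have hdet0 : (1 - M).det = 0 := by
    have h2 := congrArg Matrix.det hMtM
    rw [Matrix.det_mul, Matrix.det_transpose, hdet, one_mul, Matrix.det_transpose] at h2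
    have h3 : M - 1 = -(1 - M) := (neg_sub 1 M).symm
    rw [h3, Matrix.det_neg] at h2
    simp at h2
    linarith
  set U : Matrix (Fin 3) (Fin 3) ℝ := !![u1, v1, w1; u2, v2, w2; u3, v3, w3] with hU
  have hAU : (1 - M) * U = 1 := by
    ext i j
    rw [Matrix.mul_apply, Fin.sum_univ_three]
    fin_cases i <;> fin_cases j <;>
      simp [hM, hU, Matrix.one_apply] <;> linarith [U1, U2, U3, V1, V2, V3, W1, W2, W3]
  have hfin := Matrix.det_mul (1 - M) U
  rw [hAU, hdet0] at hfin
  simp at hfin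

lemma fullproj1 (l : LieSubalgebra ℝ (ℍ × ℍ)) (hl : l ≤ sp11) (u v u' v' : ℍ)
    (hu : (u,v) ∈ l) (hu' : (u',v') ∈ l) (hne : ⁅u,u'⁆ ≠ 0) :
    ∀ z : ℍ, z.re = 0 → ∃ w, ((z,w) ∈ l) := by
  intro z hz
  obtain ⟨α, β, γ, hzs⟩ := span3 u u' z ((mem_sp11' _).mp (hl hu)).1
    ((mem_sp11' _).mp (hl hu')).1 hz hne
  refine ⟨α•v + β•v' + γ•⁅v,v'⁆, ?_⟩
  have hel := l.add_mem (l.add_mem (l.smul_mem α hu) (l.smul_mem β hu'))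
    (l.smul_mem γ (l.lie_mem hu hu'))
  have he : α•((u,v) : ℍ×ℍ) + β•(u',v') + γ•⁅((u,v) : ℍ×ℍ),(u',v')⁆
      = (z, α•v + β•v' + γ•⁅v,v'⁆) := by
    rw [lie_prod']
    simp only [Prod.smul_mk, Prod.mk_add_mk, Prod.mk.injEq]
    exact ⟨hzs.symm, trivial⟩
  rwa [he] at hel

lemma fullproj2 (l : LieSubalgebra ℝ (ℍ × ℍ)) (hl : l ≤ sp11) (u v u' v' : ℍ)
    (hu : (u,v) ∈ l) (hu' : (u',v') ∈ l) (hne : ⁅v,v'⁆ ≠ 0) :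
    ∀ z : ℍ, z.re = 0 → ∃ w, ((w,z) ∈ l) := by
  intro z hz
  obtain ⟨α, β, γ, hzs⟩ := span3 v v' z ((mem_sp11' _).mp (hl hu)).2
    ((mem_sp11' _).mp (hl hu')).2 hz hne
  refine ⟨α•u + β•u' + γ•⁅u,u'⁆, ?_⟩
  have hel := l.add_mem (l.add_mem (l.smul_mem α hu) (l.smul_mem β hu'))
    (l.smul_mem γ (l.lie_mem hu hu'))
  have he : α•((u,v) : ℍ×ℍ) + β•(u',v') + γ•⁅((u,v) : ℍ×ℍ),(u',v')⁆
      = (α•u + β•u' + γ•⁅u,u'⁆, z) := by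
    rw [lie_prod']
    simp only [Prod.smul_mk, Prod.mk_add_mk, Prod.mk.injEq]
    exact ⟨trivial, hzs.symm⟩
  rwa [he] at hel

lemma nonzero_of_im (x : ℍ) (hre : x.re = 0) (h0 : x ≠ 0) :
    (4*(x.imI^2+x.imJ^2+x.imK^2)) ≠ 0 := by
  intro h
  apply h0
  have e1 : x.imI^2 = 0 := by linarith [sq_nonneg x.imI, sq_nonneg x.imJ, sq_nonneg x.imK]
  have e2 : x.imJ^2 = 0 := by linarith [sq_nonneg x.imI, sq_nonneg x.imJ, sq_nonneg x.imK]
  have e3 : x.imK^2 = 0 := by linarith [sq_nonneg x.imI, sq_nonneg x.imJ, sq_nonneg x.imK]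
  ext
  · simp [hre]
  · simp [sq_eq_zero_iff.mp e1]
  · simp [sq_eq_zero_iff.mp e2]
  · simp [sq_eq_zero_iff.mp e3]

lemma k1full (l : LieSubalgebra ℝ (ℍ × ℍ)) (hl : l ≤ sp11)
    (full1 : ∀ z : ℍ, z.re = 0 → ∃ w, ((z, w) ∈ l))
    (x : ℍ) (hx0 : x ≠ 0) (hxl : ((x, (0:ℍ)) ∈ l)) :
    ∀ y : ℍ, y.re = 0 → ((y, (0:ℍ)) ∈ l) := by
  have hxre : x.re = 0 := ((mem_sp11' _).mp (hl hxl)).1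
  have step : ∀ a : ℍ, a.re = 0 → ∀ z : ℍ, ((z, (0:ℍ)) ∈ l) → ((⁅a, z⁆, (0:ℍ)) ∈ l) := by
    intro a ha z hzl
    obtain ⟨w, hw⟩ := full1 a ha
    have h1 := l.lie_mem hw hzl
    rw [lie_prod'] at h1
    simpa using h1
  intro y hy
  have m2 : ((⁅⁅y, x⁆, x⁆, (0:ℍ)) ∈ l) := step _ (lie_re' y x) x hxl
  have hs0 := nonzero_of_im x hxre hx0
  have hid := double_bracket x y hxre hy
  have hskew : ⁅⁅x,y⁆,x⁆ = -⁅⁅y,x⁆,x⁆ := by simp only [Ring.lie_def]; noncomm_ring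
  have hel : ((1/(4*(x.imI^2+x.imJ^2+x.imK^2))) •
      ((-1:ℝ) • ((⁅⁅y,x⁆,x⁆, (0:ℍ)) : ℍ×ℍ) - (4*((x*y).re)) • ((x, (0:ℍ)) : ℍ×ℍ))) ∈ l :=
    l.smul_mem _ (sub_mem (l.smul_mem _ m2) (l.smul_mem _ hxl))
  have key : ((1/(4*(x.imI^2+x.imJ^2+x.imK^2))) •
      ((-1:ℝ) • ((⁅⁅y,x⁆,x⁆, (0:ℍ)) : ℍ×ℍ) - (4*((x*y).re)) • ((x, (0:ℍ)) : ℍ×ℍ)))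
      = ((y, (0:ℍ)) : ℍ×ℍ) := by
    simp only [Prod.smul_mk, Prod.mk_sub_mk, Prod.mk.injEq]
    constructor
    · have h1 : (-1:ℝ) • ⁅⁅y,x⁆,x⁆ - (4*((x*y).re)) • x
          = (4*(x.imI^2+x.imJ^2+x.imK^2)) • y := by
        rw [hid, hskew]
        module
      rw [h1, smul_smul, one_div, inv_mul_cancel₀ hs0, one_smul]
    · simp
  rw [key] at hel
  exact hel

lemma k2full (l : LieSubalgebra ℝ (ℍ × ℍ)) (hl : l ≤ sp11)
    (full2 : ∀ z : ℍ, z.re = 0 → ∃ w, ((w, z) ∈ l))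
    (x : ℍ) (hx0 : x ≠ 0) (hxl : (((0:ℍ), x) ∈ l)) :
    ∀ y : ℍ, y.re = 0 → (((0:ℍ), y) ∈ l) := by
  have hxre : x.re = 0 := ((mem_sp11' _).mp (hl hxl)).2
  have step : ∀ a : ℍ, a.re = 0 → ∀ z : ℍ, (((0:ℍ), z) ∈ l) → (((0:ℍ), ⁅a, z⁆) ∈ l) := by
    intro a ha z hzl
    obtain ⟨w, hw⟩ := full2 a ha
    have h1 := l.lie_mem hw hzl
    rw [lie_prod'] at h1
    simpa using h1
  intro y hy
  have m2 : (((0:ℍ), ⁅⁅y, x⁆, x⁆) ∈ l) := step _ (lie_re' y x) x hxl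
  have hs0 := nonzero_of_im x hxre hx0
  have hid := double_bracket x y hxre hy
  have hskew : ⁅⁅x,y⁆,x⁆ = -⁅⁅y,x⁆,x⁆ := by simp only [Ring.lie_def]; noncomm_ring
  have hel : ((1/(4*(x.imI^2+x.imJ^2+x.imK^2))) •
      ((-1:ℝ) • (((0:ℍ), ⁅⁅y,x⁆,x⁆) : ℍ×ℍ) - (4*((x*y).re)) • (((0:ℍ), x) : ℍ×ℍ))) ∈ l :=
    l.smul_mem _ (sub_mem (l.smul_mem _ m2) (l.smul_mem _ hxl))
  have key : ((1/(4*(x.imI^2+x.imJ^2+x.imK^2))) •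
      ((-1:ℝ) • (((0:ℍ), ⁅⁅y,x⁆,x⁆) : ℍ×ℍ) - (4*((x*y).re)) • (((0:ℍ), x) : ℍ×ℍ)))
      = (((0:ℍ), y) : ℍ×ℍ) := by
    simp only [Prod.smul_mk, Prod.mk_sub_mk, Prod.mk.injEq]
    constructor
    · simp
    · have h1 : (-1:ℝ) • ⁅⁅y,x⁆,x⁆ - (4*((x*y).re)) • x
          = (4*(x.imI^2+x.imJ^2+x.imK^2)) • y := by
        rw [hid, hskew]
        module
      rw [h1, smul_smul, one_div, inv_mul_cancel₀ hs0, one_smul]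
  rw [key] at hel
  exact hel

lemma im_decomp (x : ℍ) (hx : x.re = 0) : x = x.imI • qI + x.imJ • qJ + x.imK • qK := by
  ext <;> simp [hx] <;> simp [qI, qJ, qK]

end Helpers

end

noncomputable section

attribute [local instance 100] LieRing.ofAssociativeRing

section Main

local notation "ℍ" => Quaternion ℝ

attribute [local simp] Quaternion.re_zero Quaternion.imI_zero Quaternion.imJ_zero Quaternion.imK_zero

/-- Let `L ⊆ O(4)` be a connected closed subgroup acting transitively on
`S³`; at the Lie algebra level (under `so(4) ≅ sp(1) ⊕ sp(1)`) this means that the Lie algebra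
`l` of `L` satisfies `l + Δ = sp(1) ⊕ sp(1)`.  Then `l` is `sp(1) ⊕ l₂` or `l₂ ⊕ sp(1)` for
some subalgebra `l₂ ⊆ sp(1)` (possibly trivial, one-dimensional, or all of `sp(1)`); in
particular `l` contains a full `sp(1)`-factor. -/
theorem transitive_on_sphere_lie_algebra_classification
    (l : LieSubalgebra ℝ (Quaternion ℝ × Quaternion ℝ)) (hl : l ≤ sp11)
    (htrans : l.toSubmodule ⊔ diagSp.toSubmodule = sp11.toSubmodule) :
    ((∃ l₂ : LieSubalgebra ℝ (Quaternion ℝ), l₂ ≤ sp1 ∧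
        ∀ p : Quaternion ℝ × Quaternion ℝ, p ∈ l ↔ (p.1.re = 0 ∧ p.2 ∈ l₂)) ∨
      (∃ l₂ : LieSubalgebra ℝ (Quaternion ℝ), l₂ ≤ sp1 ∧
        ∀ p : Quaternion ℝ × Quaternion ℝ, p ∈ l ↔ (p.1 ∈ l₂ ∧ p.2.re = 0))) ∧
    ((∀ x : Quaternion ℝ, x.re = 0 → ((x, 0) : Quaternion ℝ × Quaternion ℝ) ∈ l) ∨
      (∀ x : Quaternion ℝ, x.re = 0 → ((0, x) : Quaternion ℝ × Quaternion ℝ) ∈ l)) := by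
  classical
  have hmem : ∀ p : ℍ × ℍ, p ∈ l → p.1.re = 0 ∧ p.2.re = 0 := fun p hp => (mem_sp11' p).mp (hl hp)
  have T : ∀ x : ℍ, x.re = 0 → ∃ a b : ℍ, ((a,b) ∈ l) ∧ a - b = x := by
    intro x hx
    have hx' : ((x, 0) : ℍ × ℍ) ∈ sp11.toSubmodule := by
      rw [LieSubalgebra.mem_toSubmodule]
      exact ⟨hx, rfl⟩
    rw [← htrans] at hx'
    obtain ⟨y, hy, z, hz, hyz⟩ := Submodule.mem_sup.mp hx'
    rw [LieSubalgebra.mem_toSubmodule] at hy hz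
    obtain ⟨hz1, _⟩ := hz
    refine ⟨y.1, y.2, by simpa using hy, ?_⟩
    have h1 : y.1 + z.1 = x := congrArg Prod.fst hyz
    have h2 : y.2 + z.2 = 0 := congrArg Prod.snd hyz
    rw [← hz1] at h2
    linear_combination (norm := module) h1 - h2
  -- the central claim
  have P : (∀ x : ℍ, x.re = 0 → (((x, (0:ℍ)) : ℍ×ℍ) ∈ l)) ∨
      (∀ x : ℍ, x.re = 0 → ((((0:ℍ), x) : ℍ×ℍ) ∈ l)) := by
    by_cases hNA1 : ∃ u v u' v' : ℍ, ((u,v) ∈ l) ∧ ((u',v') ∈ l) ∧ ⁅u,u'⁆ ≠ 0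
    · obtain ⟨u, v, u', v', hu, hu', hne⟩ := hNA1
      have full1 := fullproj1 l hl u v u' v' hu hu' hne
      by_cases hk1 : ∃ x : ℍ, x ≠ 0 ∧ ((x, (0:ℍ)) ∈ l)
      · obtain ⟨x, hx0, hxl⟩ := hk1
        exact Or.inl (k1full l hl full1 x hx0 hxl)
      · push_neg at hk1
        have hk1z : ∀ x : ℍ, ((x, (0:ℍ)) ∈ l) → x = 0 := by
          intro x hx
          by_contra h0
          exact hk1 x h0 hx
        have hne2 : ⁅v,v'⁆ ≠ 0 := by
          intro h
          apply hne
          have h1 := l.lie_mem hu hu'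
          rw [lie_prod'] at h1
          rw [h] at h1
          exact hk1z _ h1
        have full2 := fullproj2 l hl u v u' v' hu hu' hne2
        by_cases hk2 : ∃ y : ℍ, y ≠ 0 ∧ (((0:ℍ), y) ∈ l)
        · obtain ⟨y, hy0, hyl⟩ := hk2
          exact Or.inr (k2full l hl full2 y hy0 hyl)
        · exfalso
          push_neg at hk2
          have hk2z : ∀ y : ℍ, (((0:ℍ), y) ∈ l) → y = 0 := by
            intro y hy
            by_contra h0
            exact hk2 y h0 hy
          obtain ⟨p, hpl⟩ := full1 qI (by simp [qI])
          obtain ⟨q, hql⟩ := full1 qJ (by simp [qJ])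
          obtain ⟨r, hrl⟩ := full1 qK (by simp [qK])
          -- cross relations
          have crossrel : ∀ (e₁ e₂ e₃ s₁ s₂ s₃ : ℍ), ((e₁, s₁) ∈ l) → ((e₂, s₂) ∈ l) →
              ((e₃, s₃) ∈ l) → ⁅e₁,e₂⁆ = (2:ℝ) • e₃ → ⁅s₁,s₂⁆ = (2:ℝ) • s₃ := by
            intro e₁ e₂ e₃ s₁ s₂ s₃ h1 h2 h3 he
            have hb := l.lie_mem h1 h2
            rw [lie_prod'] at hb
            have hsm := l.smul_mem (2:ℝ) h3
            have hd := sub_mem hb hsm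
            have he2 : ((⁅e₁,e₂⁆, ⁅s₁,s₂⁆) : ℍ×ℍ) - (2:ℝ) • ((e₃, s₃) : ℍ×ℍ)
                = (((0:ℍ), ⁅s₁,s₂⁆ - (2:ℝ) • s₃) : ℍ×ℍ) := by
              simp only [Prod.smul_mk, Prod.mk_sub_mk, Prod.mk.injEq]
              exact ⟨by rw [he]; simp, trivial⟩
            rw [he2] at hd
            have := hk2z _ hd
            rwa [sub_eq_zero] at this
          have hpq : ⁅p,q⁆ = (2:ℝ) • r := crossrel qI qJ qK p q r hpl hql hrl hIJ'
          have hqr : ⁅q,r⁆ = (2:ℝ) • p := crossrel qJ qK qI q r p hql hrl hpl hJK'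
          have hrp : ⁅r,p⁆ = (2:ℝ) • q := crossrel qK qI qJ r p q hrl hpl hql hKI'
          have hp0 : p ≠ 0 := by
            intro h
            rw [h] at hpl
            have := hk1z qI hpl
            have h2 := congrArg QuaternionAlgebra.imI this
            simp [qI] at h2
          -- graph property
          have hgraph : ∀ x y : ℍ, ((x,y) ∈ l) → y = x.imI•p + x.imJ•q + x.imK•r := by
            intro x y hxy
            have hxre := (hmem _ hxy).1
            have hcomb : ((x, x.imI•p + x.imJ•q + x.imK•r) : ℍ×ℍ) ∈ l := by
              have h1 := l.add_mem (l.add_mem (l.smul_mem x.imI hpl) (l.smul_mem x.imJ hql))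
                (l.smul_mem x.imK hrl)
              have h2 : x.imI•((qI,p) : ℍ×ℍ) + x.imJ•(qJ,q) + x.imK•(qK,r)
                  = ((x, x.imI•p + x.imJ•q + x.imK•r) : ℍ×ℍ) := by
                simp only [Prod.smul_mk, Prod.mk_add_mk, Prod.mk.injEq]
                exact ⟨(im_decomp x hxre).symm, trivial⟩
              rwa [h2] at h1
            have hdiff := sub_mem hxy hcomb
            have h3 : ((x,y) : ℍ×ℍ) - ((x, x.imI•p + x.imJ•q + x.imK•r) : ℍ×ℍ)
                = (((0:ℍ), y - (x.imI•p + x.imJ•q + x.imK•r)) : ℍ×ℍ) := by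
              simp only [Prod.mk_sub_mk, Prod.mk.injEq]
              exact ⟨by simp, trivial⟩
            rw [h3] at hdiff
            have := hk2z _ hdiff
            rwa [sub_eq_zero] at this
          -- transitivity witnesses
          obtain ⟨xa, ya, hxa, hda⟩ := T qI (by simp [qI])
          obtain ⟨xb, yb, hxb, hdb⟩ := T qJ (by simp [qJ])
          obtain ⟨xc, yc, hxc, hdc⟩ := T qK (by simp [qK])
          have hya := hgraph _ _ hxa
          have hyb := hgraph _ _ hxb
          have hyc := hgraph _ _ hxc
          have hpre := (hmem _ hpl).2
          have hqre := (hmem _ hql).2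
          have hrre := (hmem _ hrl).2
          -- scalar equations
          apply graphCase p.imI p.imJ p.imK q.imI q.imJ q.imK r.imI r.imJ r.imK
            xa.imI xa.imJ xa.imK xb.imI xb.imJ xb.imK xc.imI xc.imJ xc.imK
          -- R
          · have h := congrArg QuaternionAlgebra.imI hpq
            rw [lie_imI' p q] at h
            simp [Quaternion.imI_smul] at h
            linarith
          · have h := congrArg QuaternionAlgebra.imJ hpq
            rw [lie_imJ' p q] at h
            simp [Quaternion.imJ_smul] at h
            linarith
          · have h := congrArg QuaternionAlgebra.imK hpq
            rw [lie_imK' p q] at h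
            simp [Quaternion.imK_smul] at h
            linarith
          -- S
          · have h := congrArg QuaternionAlgebra.imI hqr
            rw [lie_imI' q r] at h
            simp [Quaternion.imI_smul] at h
            linarith
          · have h := congrArg QuaternionAlgebra.imJ hqr
            rw [lie_imJ' q r] at h
            simp [Quaternion.imJ_smul] at h
            linarith
          · have h := congrArg QuaternionAlgebra.imK hqr
            rw [lie_imK' q r] at h
            simp [Quaternion.imK_smul] at h
            linarith
          -- T
          · have h := congrArg QuaternionAlgebra.imI hrp
            rw [lie_imI' r p] at h
            simp [Quaternion.imI_smul] at h
            linarith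
          · have h := congrArg QuaternionAlgebra.imJ hrp
            rw [lie_imJ' r p] at h
            simp [Quaternion.imJ_smul] at h
            linarith
          · have h := congrArg QuaternionAlgebra.imK hrp
            rw [lie_imK' r p] at h
            simp [Quaternion.imK_smul] at h
            linarith
          -- p ≠ 0
          · rintro ⟨h1, h2, h3⟩
            apply hp0
            ext
            · exact hpre
            · exact h1
            · exact h2
            · exact h3
          -- U equations
          · have h1 := congrArg QuaternionAlgebra.imI hda
            have h2 := congrArg QuaternionAlgebra.imI hya
            simp [qI, Quaternion.imI_sub, Quaternion.imI_add, Quaternion.imI_smul] at h1 h2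
            linarith
          · have h1 := congrArg QuaternionAlgebra.imJ hda
            have h2 := congrArg QuaternionAlgebra.imJ hya
            simp [qI, Quaternion.imJ_sub, Quaternion.imJ_add, Quaternion.imJ_smul] at h1 h2
            linarith
          · have h1 := congrArg QuaternionAlgebra.imK hda
            have h2 := congrArg QuaternionAlgebra.imK hya
            simp [qI, Quaternion.imK_sub, Quaternion.imK_add, Quaternion.imK_smul] at h1 h2
            linarith
          · have h1 := congrArg QuaternionAlgebra.imI hdb
            have h2 := congrArg QuaternionAlgebra.imI hyb
            simp [qJ, Quaternion.imI_sub, Quaternion.imI_add, Quaternion.imI_smul] at h1 h2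
            linarith
          · have h1 := congrArg QuaternionAlgebra.imJ hdb
            have h2 := congrArg QuaternionAlgebra.imJ hyb
            simp [qJ, Quaternion.imJ_sub, Quaternion.imJ_add, Quaternion.imJ_smul] at h1 h2
            linarith
          · have h1 := congrArg QuaternionAlgebra.imK hdb
            have h2 := congrArg QuaternionAlgebra.imK hyb
            simp [qJ, Quaternion.imK_sub, Quaternion.imK_add, Quaternion.imK_smul] at h1 h2
            linarith
          · have h1 := congrArg QuaternionAlgebra.imI hdc
            have h2 := congrArg QuaternionAlgebra.imI hyc
            simp [qK, Quaternion.imI_sub, Quaternion.imI_add, Quaternion.imI_smul] at h1 h2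
            linarith
          · have h1 := congrArg QuaternionAlgebra.imJ hdc
            have h2 := congrArg QuaternionAlgebra.imJ hyc
            simp [qK, Quaternion.imJ_sub, Quaternion.imJ_add, Quaternion.imJ_smul] at h1 h2
            linarith
          · have h1 := congrArg QuaternionAlgebra.imK hdc
            have h2 := congrArg QuaternionAlgebra.imK hyc
            simp [qK, Quaternion.imK_sub, Quaternion.imK_add, Quaternion.imK_smul] at h1 h2
            linarith
    · push_neg at hNA1
      by_cases hNA2 : ∃ u v u' v' : ℍ, ((u,v) ∈ l) ∧ ((u',v') ∈ l) ∧ ⁅v,v'⁆ ≠ 0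
      · obtain ⟨u, v, u', v', hu, hu', hne⟩ := hNA2
        have full2 := fullproj2 l hl u v u' v' hu hu' hne
        by_cases hk2 : ∃ y : ℍ, y ≠ 0 ∧ (((0:ℍ), y) ∈ l)
        · obtain ⟨y, hy0, hyl⟩ := hk2
          exact Or.inr (k2full l hl full2 y hy0 hyl)
        · exfalso
          push_neg at hk2
          apply hne
          have h1 := l.lie_mem hu hu'
          rw [lie_prod'] at h1
          have h0 : ⁅u,u'⁆ = 0 := hNA1 u v u' v' hu hu'
          rw [h0] at h1
          by_contra hc
          exact hk2 _ hc h1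
      · exfalso
        push_neg at hNA2
        obtain ⟨a₁, b₁, ha1, hd1⟩ := T qI (by simp [qI])
        obtain ⟨a₂, b₂, ha2, hd2⟩ := T qJ (by simp [qJ])
        obtain ⟨a₃, b₃, ha3, hd3⟩ := T qK (by simp [qK])
        -- coordinate relations for b's
        have hb1 : b₁ = a₁ - qI := by rw [← hd1]; abel
        have hb2 : b₂ = a₂ - qJ := by rw [← hd2]; abel
        have hb3 : b₃ = a₃ - qK := by rw [← hd3]; abel
        have c12 := hNA1 a₁ b₁ a₂ b₂ ha1 ha2
        have c13 := hNA1 a₁ b₁ a₃ b₃ ha1 ha3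
        have c23 := hNA1 a₂ b₂ a₃ b₃ ha2 ha3
        have d12 := hNA2 a₁ b₁ a₂ b₂ ha1 ha2
        have d13 := hNA2 a₁ b₁ a₃ b₃ ha1 ha3
        have d23 := hNA2 a₂ b₂ a₃ b₃ ha2 ha3
        rw [hb1, hb2] at d12
        rw [hb1, hb3] at d13
        rw [hb2, hb3] at d23
        apply caseA a₁.imI a₁.imJ a₁.imK a₂.imI a₂.imJ a₂.imK a₃.imI a₃.imJ a₃.imK
        · have h := congrArg QuaternionAlgebra.imI c12; rw [lie_imI'] at h; simp at h; linarith
        · have h := congrArg QuaternionAlgebra.imJ c12; rw [lie_imJ'] at h; simp at h; linarith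
        · have h := congrArg QuaternionAlgebra.imK c12; rw [lie_imK'] at h; simp at h; linarith
        · have h := congrArg QuaternionAlgebra.imI c13; rw [lie_imI'] at h; simp at h; linarith
        · have h := congrArg QuaternionAlgebra.imJ c13; rw [lie_imJ'] at h; simp at h; linarith
        · have h := congrArg QuaternionAlgebra.imK c13; rw [lie_imK'] at h; simp at h; linarith
        · have h := congrArg QuaternionAlgebra.imI c23; rw [lie_imI'] at h; simp at h; linarith
        · have h := congrArg QuaternionAlgebra.imJ c23; rw [lie_imJ'] at h; simp at h; linarith
        · have h := congrArg QuaternionAlgebra.imK c23; rw [lie_imK'] at h; simp at h; linarith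
        · have h := congrArg QuaternionAlgebra.imI d12; rw [lie_imI'] at h
          simp [Quaternion.imJ_sub, Quaternion.imK_sub] at h; simp [qI, qJ] at h; linarith
        · have h := congrArg QuaternionAlgebra.imJ d12; rw [lie_imJ'] at h
          simp [Quaternion.imI_sub, Quaternion.imK_sub] at h; simp [qI, qJ] at h; linarith
        · have h := congrArg QuaternionAlgebra.imK d12; rw [lie_imK'] at h
          simp [Quaternion.imI_sub, Quaternion.imJ_sub] at h; simp [qI, qJ] at h; linarith
        · have h := congrArg QuaternionAlgebra.imI d13; rw [lie_imI'] at h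
          simp [Quaternion.imJ_sub, Quaternion.imK_sub] at h; simp [qI, qK] at h; linarith
        · have h := congrArg QuaternionAlgebra.imJ d13; rw [lie_imJ'] at h
          simp [Quaternion.imI_sub, Quaternion.imK_sub] at h; simp [qI, qK] at h; linarith
        · have h := congrArg QuaternionAlgebra.imK d13; rw [lie_imK'] at h
          simp [Quaternion.imI_sub, Quaternion.imJ_sub] at h; simp [qI, qK] at h; linarith
        · have h := congrArg QuaternionAlgebra.imI d23; rw [lie_imI'] at h
          simp [Quaternion.imJ_sub, Quaternion.imK_sub] at h; simp [qJ, qK] at h; linarith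
        · have h := congrArg QuaternionAlgebra.imJ d23; rw [lie_imJ'] at h
          simp [Quaternion.imI_sub, Quaternion.imK_sub] at h; simp [qJ, qK] at h; linarith
        · have h := congrArg QuaternionAlgebra.imK d23; rw [lie_imK'] at h
          simp [Quaternion.imI_sub, Quaternion.imJ_sub] at h; simp [qJ, qK] at h; linarith
  -- assemble the conclusion from P
  rcases P with hP | hP
  · refine ⟨Or.inl ?_, Or.inl hP⟩
    refine ⟨{ carrier := {y : ℍ | (((0:ℍ), y) : ℍ×ℍ) ∈ l}
              zero_mem' := by exact l.zero_mem
              add_mem' := by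
                intro a b ha hb
                have := l.add_mem ha hb
                simpa using this
              smul_mem' := by
                intro c a ha
                have := l.smul_mem c ha
                simpa using this
              lie_mem' := by
                intro a b ha hb
                have := l.lie_mem ha hb
                rw [lie_prod'] at this
                simpa using this }, ?_, ?_⟩
    · intro y hy
      exact (hmem _ hy).2
    · intro p
      constructor
      · intro hp
        refine ⟨(hmem _ hp).1, ?_⟩
        have h1 := hP p.1 (hmem _ hp).1
        have h2 := sub_mem hp h1
        have h3 : p - ((p.1, (0:ℍ)) : ℍ×ℍ) = (((0:ℍ), p.2) : ℍ×ℍ) := by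
          have hpe : p = (p.1, p.2) := rfl
          rw [hpe, Prod.mk_sub_mk, sub_self, sub_zero]
        rw [h3] at h2
        exact h2
      · rintro ⟨h1, h2⟩
        have ha := hP p.1 h1
        have hb : (((0:ℍ), p.2) : ℍ×ℍ) ∈ l := h2
        have := l.add_mem ha hb
        simpa using this
  · refine ⟨Or.inr ?_, Or.inr hP⟩
    refine ⟨{ carrier := {y : ℍ | ((y, (0:ℍ)) : ℍ×ℍ) ∈ l}
              zero_mem' := by exact l.zero_mem
              add_mem' := by
                intro a b ha hb
                have := l.add_mem ha hb
                simpa using this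
              smul_mem' := by
                intro c a ha
                have := l.smul_mem c ha
                simpa using this
              lie_mem' := by
                intro a b ha hb
                have := l.lie_mem ha hb
                rw [lie_prod'] at this
                simpa using this }, ?_, ?_⟩
    · intro y hy
      exact (hmem _ hy).1
    · intro p
      constructor
      · intro hp
        refine ⟨?_, (hmem _ hp).2⟩
        have h1 := hP p.2 (hmem _ hp).2
        have h2 := sub_mem hp h1
        have h3 : p - (((0:ℍ), p.2) : ℍ×ℍ) = ((p.1, (0:ℍ)) : ℍ×ℍ) := by
          have hpe : p = (p.1, p.2) := rfl
          rw [hpe, Prod.mk_sub_mk, sub_self, sub_zero]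
        rw [h3] at h2
        exact h2
      · rintro ⟨h1, h2⟩
        have ha : ((p.1, (0:ℍ)) : ℍ×ℍ) ∈ l := h1
        have hb := hP p.2 h2
        have := l.add_mem ha hb
        simpa using this

end Main

end
end
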